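/- Let A, P, S be real M×M matrices such that P is symmetric positive definite, S is symmetric positive definite, and AᵀP + PA + S = 0. Then A is Hurwitz: every eigenvalue μ ∈ ℂ of A (i.e., every element of the spectrum of the complexification of A) satisfies Re(μ) < 0. -/

import Mathlib

open Matrix

private lemma re_herm_form (M : ℕ) (P : Matrix (Fin M) (Fin M) ℝ) (v : Fin M → ℂ) :
    (star v ⬝ᵥ (P.map ((↑) : ℝ → ℂ)) *ᵥ v).re =
      (fun i => (v i).re) ⬝ᵥ P *ᵥ (fun i => (v i).re) +
      (fun i => (v i).im) ⬝ᵥ P *ᵥ (fun i => (v i).im) := by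
  simp only [dotProduct, mulVec, Pi.star_apply, map_apply, Complex.re_sum,
    Finset.mul_sum, ← Finset.sum_add_distrib]
  apply Finset.sum_congr rfl
  intro i _
  apply Finset.sum_congr rfl
  intro j _
  simp only [Complex.mul_re, Complex.mul_im, RCLike.star_def,
    Complex.conj_re, Complex.conj_im, Complex.ofReal_re, Complex.ofReal_im]
  ring

/-- Positivity of complexified quadratic form. -/
private lemma posdef_complexify (M : ℕ) (P : Matrix (Fin M) (Fin M) ℝ) (hP : P.PosDef)
    (v : Fin M → ℂ) (hv : v ≠ 0) :
    0 < (star v ⬝ᵥ (P.map ((↑) : ℝ → ℂ)) *ᵥ v).re := by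
  rw [re_herm_form]
  set a : Fin M → ℝ := fun i => (v i).re with ha
  set b : Fin M → ℝ := fun i => (v i).im with hb
  have hab : a ≠ 0 ∨ b ≠ 0 := by
    by_contra h
    push_neg at h
    apply hv
    funext i
    have h1 : a i = 0 := by rw [h.1]; rfl
    have h2 : b i = 0 := by rw [h.2]; rfl
    exact Complex.ext h1 h2
  have hpa : ∀ x : Fin M → ℝ, 0 ≤ x ⬝ᵥ P *ᵥ x := by
    intro x
    simpa using hP.posSemidef.dotProduct_mulVec_nonneg x
  rcases hab with h | h
  · have := hP.dotProduct_mulVec_pos h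
    simp only [star_trivial] at this
    linarith [hpa b]
  · have := hP.dotProduct_mulVec_pos h
    simp only [star_trivial] at this
    linarith [hpa a]

/-- If `P` and `S` are symmetric positive definite real matrices with
`AᵀP + PA + S = 0`, then `A` is Hurwitz: every eigenvalue `μ ∈ ℂ` of (the
complexification of) `A` has negative real part. -/
theorem lyapunov_implies_hurwitz
    (M : ℕ)
    (A P S : Matrix (Fin M) (Fin M) ℝ)
    (hP : P.PosDef) (hS : S.PosDef)
    (hLyap : Aᵀ * P + P * A + S = 0)
    (μ : ℂ) (hμ : μ ∈ spectrum ℂ (A.map ((↑) : ℝ → ℂ))) :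
    μ.re < 0 := by
  set A' := A.map ((↑) : ℝ → ℂ) with hA'
  set P' := P.map ((↑) : ℝ → ℂ) with hP'
  set S' := S.map ((↑) : ℝ → ℂ) with hS'
  -- extract an eigenvector
  rw [spectrum.mem_iff] at hμ
  rw [Matrix.isUnit_iff_isUnit_det, isUnit_iff_ne_zero, not_not] at hμ
  obtain ⟨v, hv, hAv⟩ := (Matrix.exists_mulVec_eq_zero_iff).mpr hμ
  have heig : A' *ᵥ v = μ • v := by
    have h1 : algebraMap ℂ (Matrix (Fin M) (Fin M) ℂ) μ *ᵥ v = μ • v := by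
      simp [Algebra.algebraMap_eq_smul_one, Matrix.smul_mulVec]
    have h0 := hAv
    rw [Matrix.sub_mulVec, h1, sub_eq_zero] at h0
    exact h0.symm
  -- conjugate transpose facts
  have hAH : A'ᴴ = Aᵀ.map ((↑) : ℝ → ℂ) := by
    ext i j
    simp [hA', conjTranspose_apply]
  -- Lyapunov equation complexified
  have hLyapC : (Aᵀ.map ((↑) : ℝ → ℂ)) * P' + P' * A' = -S' := by
    have hmap : (Complex.ofRealHom.mapMatrix : Matrix (Fin M) (Fin M) ℝ →+* _)
        (Aᵀ * P + P * A + S) = 0 := by rw [hLyap]; simp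
    simp only [map_add, RingHom.mapMatrix_apply] at hmap
    simp only [Matrix.map_mul] at hmap
    have hcoe : (⇑Complex.ofRealHom : ℝ → ℂ) = ((↑) : ℝ → ℂ) := rfl
    rw [hcoe] at hmap
    rw [← hA', ← hP', ← hS'] at hmap
    rw [add_eq_zero_iff_eq_neg] at hmap
    exact hmap
  -- key scalar identity
  set c : ℂ := star v ⬝ᵥ P' *ᵥ v with hc
  set s : ℂ := star v ⬝ᵥ S' *ᵥ v with hs
  have hterm1 : star v ⬝ᵥ ((Aᵀ.map ((↑) : ℝ → ℂ)) * P') *ᵥ v = (starRingEnd ℂ) μ * c := by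
    rw [← hAH, ← Matrix.mulVec_mulVec, Matrix.dotProduct_mulVec, ← Matrix.star_mulVec,
      heig]
    rw [star_smul, smul_dotProduct]
    rfl
  have hterm2 : star v ⬝ᵥ (P' * A') *ᵥ v = μ * c := by
    rw [← Matrix.mulVec_mulVec, heig, Matrix.mulVec_smul, dotProduct_smul, smul_eq_mul, hc]
  have hkey : ((starRingEnd ℂ) μ + μ) * c = -s := by
    have h2 := congrArg (fun X => star v ⬝ᵥ X *ᵥ v) hLyapC
    simp only [Matrix.add_mulVec, dotProduct_add, Matrix.neg_mulVec,
      dotProduct_neg] at h2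
    rw [hterm1, hterm2] at h2
    rw [add_mul]
    exact h2
  -- take real parts
  have hre : (2 * μ.re) * c.re = -s.re := by
    have hconj : (starRingEnd ℂ) μ + μ = ((2 * μ.re : ℝ) : ℂ) := by
      rw [add_comm, Complex.add_conj]
    rw [hconj] at hkey
    have h3 := congrArg Complex.re hkey
    simpa using h3
  have hcpos : 0 < c.re := posdef_complexify M P hP v hv
  have hspos : 0 < s.re := posdef_complexify M S hS v hv
  nlinarith
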